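/- arXiv:1806.05531 — 2 statements merged into one kernel-verified Lean document; each statement's English description precedes it below -/
import Mathlib

section
/- Let (R, m) be a complete Noetherian local ring (i.e. R is m-adically complete), let E be an injective hull of the residue field R/m, and write D(-) = Hom_R(-, E) for the Matlis duality functor. Let M be an Artinian R-module. Then the map Φ : Hom_R(M, M) → Hom_R(D(M), D(M)) defined by Φ(φ)(θ) = θ ∘ φ for φ ∈ Hom_R(M, M) and θ ∈ D(M) is bijective (an isomorphism of R-modules). -/
open IsLocalRing

set_option linter.unusedSectionVars false
set_option maxHeartbeats 1000000

section Matlis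

variable (R : Type) [CommRing R] [IsNoetherianRing R] [IsLocalRing R]
  (E : Type) [AddCommGroup E] [Module R E] [Module.Injective R E]
  (ι : IsLocalRing.ResidueField R →ₗ[R] E)

/-- The submodule of elements of `E` killed by `𝔪^t`. -/
def MatlisEt (t : ℕ) : Submodule R E where
  carrier := {x | ∀ r ∈ (maximalIdeal R) ^ t, r • x = 0}
  zero_mem' := by intro r _; simp
  add_mem' := by intro a b ha hb r hr; rw [smul_add, ha r hr, hb r hr, add_zero]
  smul_mem' := by intro c x hx r hr; rw [smul_comm, hx r hr, smul_zero]

lemma MatlisEt_mem {t : ℕ} {x : E} :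
    x ∈ MatlisEt R E t ↔ ∀ r ∈ (maximalIdeal R) ^ t, r • x = 0 := Iff.rfl

lemma MatlisEt_mono {s t : ℕ} (h : s ≤ t) : MatlisEt R E s ≤ MatlisEt R E t := by
  intro x hx r hr
  exact hx r (Ideal.pow_le_pow_right h hr)

variable {R E}

/-- `E` is a cogenerator: any nonzero element of any module is detected by a map to `E`. -/
lemma matlis_cogen (hι : Function.Injective ι) {N : Type} [AddCommGroup N] [Module R N]
    (x : N) (hx : x ≠ 0) : ∃ θ : N →ₗ[R] E, θ x ≠ 0 := by
  classical
  set f : R →ₗ[R] N := LinearMap.toSpanSingleton R N x with hf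
  have hker : LinearMap.ker f ≤ maximalIdeal R := by
    apply IsLocalRing.le_maximalIdeal
    intro htop
    have : (1 : R) ∈ LinearMap.ker f := htop ▸ Submodule.mem_top
    simp only [LinearMap.mem_ker, hf, LinearMap.toSpanSingleton_apply, one_smul] at this
    exact hx this
  set g₀ : R →ₗ[R] E := ι ∘ₗ Algebra.linearMap R (ResidueField R) with hg₀
  have hkg : LinearMap.ker f ≤ LinearMap.ker g₀ := by
    intro r hr
    have hrm : r ∈ maximalIdeal R := hker hr
    simp only [LinearMap.mem_ker, hg₀, LinearMap.comp_apply, Algebra.linearMap_apply]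
    have : algebraMap R (ResidueField R) r = 0 := by
      rw [IsLocalRing.ResidueField.algebraMap_eq]
      exact Ideal.Quotient.eq_zero_iff_mem.mpr hrm
    rw [this, map_zero]
  set θ₀ : ↥(LinearMap.range f) →ₗ[R] E :=
    (Submodule.liftQ (LinearMap.ker f) g₀ hkg) ∘ₗ f.quotKerEquivRange.symm.toLinearMap with hθ₀
  obtain ⟨θ, hθ⟩ := Module.Injective.out (LinearMap.range f).subtype
    (Submodule.injective_subtype _) θ₀
  refine ⟨θ, ?_⟩
  have hx1 : x = f 1 := by simp [hf]
  have hmem : f 1 ∈ LinearMap.range f := LinearMap.mem_range_self f 1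
  have h1 : θ x = θ₀ ⟨f 1, hmem⟩ := by
    rw [hx1]
    exact (hθ ⟨f 1, hmem⟩)
  have h2 : f.quotKerEquivRange.symm ⟨f 1, hmem⟩ = Submodule.Quotient.mk 1 :=
    LinearMap.quotKerEquivRange_symm_apply_image f 1 hmem
  have h3 : θ₀ ⟨f 1, hmem⟩ = g₀ 1 := by
    rw [hθ₀]
    simp only [LinearMap.comp_apply, LinearEquiv.coe_toLinearMap, h2]
    exact Submodule.liftQ_apply _ _ _
  rw [h1, h3, hg₀]
  simp only [LinearMap.comp_apply, Algebra.linearMap_apply, map_one]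
  intro h0
  have : (1 : ResidueField R) = 0 := by
    apply hι; rw [map_zero]; exact h0
  exact one_ne_zero this

/-- Separation: maps to `E` separate points. -/
lemma matlis_sep (hι : Function.Injective ι) {N : Type} [AddCommGroup N] [Module R N]
    {x y : N} (h : ∀ θ : N →ₗ[R] E, θ x = θ y) : x = y := by
  by_contra hne
  obtain ⟨θ, hθ⟩ := matlis_cogen ι hι (x - y) (sub_ne_zero.mpr hne)
  exact hθ (by rw [map_sub, h θ, sub_self])

/-- Elements killed by `𝔪` lie in the image of `ι` (socle of `E` is the residue field). -/
lemma matlis_socle (hess : ∀ N : Submodule R E, N ≠ ⊥ → N ⊓ LinearMap.range ι ≠ ⊥)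
    {x : E} (hx : x ∈ MatlisEt R E 1) : x ∈ LinearMap.range ι := by
  rcases eq_or_ne x 0 with rfl | hx0
  · exact zero_mem _
  have hspan : (R ∙ x) ≠ ⊥ := by
    simpa [Submodule.span_singleton_eq_bot] using hx0
  obtain ⟨z, hz, hz0⟩ := Submodule.exists_mem_ne_zero_of_ne_bot (hess _ hspan)
  obtain ⟨hz1, hz2⟩ := Submodule.mem_inf.mp hz
  obtain ⟨c, rfl⟩ := Submodule.mem_span_singleton.mp hz1
  have hc : c ∉ maximalIdeal R := by
    intro hc
    exact hz0 (hx c (by simpa using hc))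
  have hcu : IsUnit c := by
    by_contra hne
    exact hc hne
  obtain ⟨u, rfl⟩ := hcu
  obtain ⟨w, hw⟩ := hz2
  refine ⟨(↑u⁻¹ : R) • w, ?_⟩
  rw [map_smul, hw, smul_smul]
  simp

/-- Multiplication by an element of `𝔪^t` maps `MatlisEt (t+1)` into the image of `ι`. -/
lemma matlis_smul_mem_range (hess : ∀ N : Submodule R E, N ≠ ⊥ → N ⊓ LinearMap.range ι ≠ ⊥)
    {t : ℕ} {s : R} (hs : s ∈ (maximalIdeal R) ^ t) {x : E} (hx : x ∈ MatlisEt R E (t + 1)) :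
    s • x ∈ LinearMap.range ι := by
  apply matlis_socle ι hess
  intro r hr
  rw [pow_one] at hr
  rw [smul_smul]
  exact hx _ (by rw [pow_succ']; exact Ideal.mul_mem_mul hr hs)

/-- The annihilator of `MatlisEt t` is contained in `𝔪^t`. -/
lemma matlis_ann_le (hι : Function.Injective ι) {t : ℕ} {s : R}
    (hs : ∀ x ∈ MatlisEt R E t, s • x = 0) : s ∈ (maximalIdeal R) ^ t := by
  by_contra hsn
  set I : Ideal R := (maximalIdeal R) ^ t with hI
  have h1 : I.mkQ s ≠ 0 := by
    rw [Submodule.mkQ_apply, ne_eq, Submodule.Quotient.mk_eq_zero]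
    exact hsn
  obtain ⟨θ, hθ⟩ := matlis_cogen ι hι _ h1
  have hx : θ (I.mkQ 1) ∈ MatlisEt R E t := by
    intro r hr
    rw [← map_smul, ← map_smul]
    have : r • (1 : R) = r := by simp
    rw [this]
    have : I.mkQ r = 0 := by rw [Submodule.mkQ_apply, Submodule.Quotient.mk_eq_zero]; exact hr
    rw [this, map_zero]
  have := hs _ hx
  rw [← map_smul, ← map_smul] at this
  have hs1 : s • (1 : R) = s := by simp
  rw [hs1] at this
  exact hθ this

/-- Every element of `E` is killed by a power of `𝔪`. -/
lemma matlis_torsion (hess : ∀ N : Submodule R E, N ≠ ⊥ → N ⊓ LinearMap.range ι ≠ ⊥)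
    (x : E) : ∃ t : ℕ, x ∈ MatlisEt R E t := by
  classical
  set A : Ideal R := LinearMap.ker (LinearMap.toSpanSingleton R E x) with hA
  have hrad : maximalIdeal R ≤ A.radical := by
    intro a ha
    rw [Ideal.mem_radical_iff]
    by_contra hnot
    push_neg at hnot
    have hne : ∀ n : ℕ, a ^ n • x ≠ 0 := by
      intro n h0
      exact hnot n (by simpa [hA, LinearMap.mem_ker, LinearMap.toSpanSingleton_apply] using h0)
    -- the chain of annihilators of `a^n • x` stabilizes
    set J : ℕ →o Ideal R :=
      ⟨fun n => LinearMap.ker (LinearMap.toSpanSingleton R E (a ^ n • x)), by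
        intro m n hmn
        induction n, hmn using Nat.le_induction with
        | base => exact le_refl _
        | succ n hmn ih =>
          refine le_trans ih ?_
          intro r hr
          simp only [LinearMap.mem_ker, LinearMap.toSpanSingleton_apply, smul_smul] at hr ⊢
          rw [pow_succ, show r * (a ^ n * a) = a * (r * a ^ n) by ring, ← smul_smul, hr,
            smul_zero]⟩ with hJ
    obtain ⟨n₀, hn₀⟩ := monotone_stabilizes_iff_noetherian.mpr inferInstance J
    have hy : a ^ (n₀ + 1) • x ≠ 0 := hne _
    have hspan : (R ∙ (a ^ (n₀ + 1) • x)) ≠ ⊥ := by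
      simpa [Submodule.span_singleton_eq_bot] using hy
    obtain ⟨z, hz, hz0⟩ := Submodule.exists_mem_ne_zero_of_ne_bot (hess _ hspan)
    obtain ⟨hz1, hz2⟩ := Submodule.mem_inf.mp hz
    obtain ⟨c, rfl⟩ := Submodule.mem_span_singleton.mp hz1
    -- `a` kills everything in the image of `ι`
    have haz : (a * (c * a ^ (n₀ + 1))) • x = 0 := by
      have h' : a • (c • a ^ (n₀ + 1) • x) = 0 := by
        obtain ⟨w, hw⟩ := hz2
        rw [← hw, ← map_smul]
        have haw : a • w = 0 := by
          have h0 : residue R a = 0 := Ideal.Quotient.eq_zero_iff_mem.mpr ha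
          rw [Algebra.smul_def a w, IsLocalRing.ResidueField.algebraMap_eq, h0, zero_mul]
        rw [haw, map_zero]
      simpa [smul_smul] using h'
    have hmem : c * a ∈ J (n₀ + 1) := by
      simp only [hJ, OrderHom.coe_mk, LinearMap.mem_ker, LinearMap.toSpanSingleton_apply,
        smul_smul]
      change (c * a) • a ^ (n₀ + 1) • x = 0
      rw [smul_smul]
      rw [show c * a * a ^ (n₀ + 1) = a * (c * a ^ (n₀ + 1)) by ring]
      exact haz
    have hmem0 : c * a ∈ J n₀ := by rw [hn₀ (n₀ + 1) (Nat.le_succ _)]; exact hmem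
    apply hz0
    simp only [hJ, OrderHom.coe_mk, LinearMap.mem_ker, LinearMap.toSpanSingleton_apply,
      smul_smul] at hmem0
    change (c * a) • a ^ n₀ • x = 0 at hmem0
    rw [smul_smul] at hmem0
    rw [smul_smul, show c * a ^ (n₀ + 1) = c * a * a ^ n₀ by rw [pow_succ]; ring]
    exact hmem0
  obtain ⟨n, hn⟩ := Ideal.exists_pow_le_of_le_radical_of_fg hrad
    (IsNoetherian.noetherian (maximalIdeal R))
  exact ⟨n, fun r hr => by
    have := hn hr
    simpa [hA, LinearMap.mem_ker, LinearMap.toSpanSingleton_apply] using this⟩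

/-- Key induction step: an endomorphism of `E` vanishing on `MatlisEt t` acts on
`MatlisEt (t+1)` as multiplication by an element of `𝔪^t`. -/
lemma matlis_step (hι : Function.Injective ι)
    (hess : ∀ N : Submodule R E, N ≠ ⊥ → N ⊓ LinearMap.range ι ≠ ⊥)
    (t : ℕ) (g : E →ₗ[R] E) (hg : ∀ x ∈ MatlisEt R E t, g x = 0) :
    ∃ s ∈ (maximalIdeal R) ^ t, ∀ x ∈ MatlisEt R E (t + 1), g x = s • x := by
  classical
  obtain ⟨S, hS⟩ := (IsNoetherian.noetherian ((maximalIdeal R) ^ t) : Submodule.FG _)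
  set K := ResidueField R with hK
  set P := MatlisEt R E (t + 1) with hP
  set e : K ≃ₗ[R] LinearMap.range ι := LinearEquiv.ofInjective ι hι with he
  have hmulK : ∀ (r : R) (w : K), residue R r • w = r • w := by
    intro r w
    rw [smul_eq_mul, ← IsLocalRing.ResidueField.algebraMap_eq, ← Algebra.smul_def]
  have hSmem : ∀ j : ↥S, (j : R) ∈ (maximalIdeal R) ^ t := fun j =>
    hS ▸ Submodule.subset_span j.2
  have hc0 : ∀ (s : R), s ∈ (maximalIdeal R) ^ t → ∀ X : ↥P, s • (X : E) ∈ LinearMap.range ι :=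
    fun s hs X => matlis_smul_mem_range ι hess hs X.2
  set c : ↥S → (↥P →ₗ[R] K) := fun j =>
    e.symm.toLinearMap ∘ₗ LinearMap.codRestrict (LinearMap.range ι)
      ((j : R) • P.subtype) (fun X => hc0 _ (hSmem j) X) with hc
  set α : ↥P →ₗ[R] (↥S → K) := LinearMap.pi c with hα
  have hαapp : ∀ (X : ↥P) (j : ↥S),
      α X j = e.symm ⟨(j : R) • (X : E), hc0 _ (hSmem j) X⟩ := fun X j => rfl
  have hgmem : ∀ X : ↥P, g (X : E) ∈ LinearMap.range ι := by
    intro X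
    apply matlis_socle ι hess
    intro r hr
    rw [pow_one] at hr
    rw [← map_smul]
    apply hg
    intro r' hr'
    rw [smul_smul]
    exact X.2 _ (by rw [pow_succ]; exact Ideal.mul_mem_mul hr' hr)
  set gg : ↥P →ₗ[R] K := e.symm.toLinearMap ∘ₗ LinearMap.codRestrict (LinearMap.range ι)
      (g ∘ₗ P.subtype) hgmem with hgg
  have hggapp : ∀ X : ↥P, gg X = e.symm ⟨g (X : E), hgmem X⟩ := fun X => rfl
  have hker : LinearMap.ker α ≤ LinearMap.ker gg := by
    intro X hX
    have hXj : ∀ j : ↥S, (j : R) • (X : E) = 0 := by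
      intro j
      have h0 : α X = 0 := hX
      have hj : α X j = 0 := by rw [h0]; rfl
      rw [hαapp] at hj
      have h00 : (⟨(j : R) • (X : E), hc0 _ (hSmem j) X⟩ : ↥(LinearMap.range ι)) = 0 :=
        e.symm.injective (by rw [hj]; exact (map_zero _).symm)
      exact Subtype.ext_iff.mp h00
    have hmem : (X : E) ∈ MatlisEt R E t := by
      intro r hr
      rw [← hS] at hr
      induction hr using Submodule.span_induction with
      | mem y hy => exact hXj ⟨y, hy⟩
      | zero => rw [zero_smul]
      | add y z _ _ hy hz => rw [add_smul, hy, hz, add_zero]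
      | smul d y _ hy => rw [smul_eq_mul, mul_smul, hy, smul_zero]
    have hgx : g (X : E) = 0 := hg _ hmem
    show gg X = 0
    rw [hggapp X]
    have hz : (⟨g (X : E), hgmem X⟩ : ↥(LinearMap.range ι)) = 0 := Subtype.ext hgx
    rw [hz, map_zero]
  set lam0 : ↥(LinearMap.range α) →ₗ[R] K :=
    (Submodule.liftQ (LinearMap.ker α) gg hker) ∘ₗ α.quotKerEquivRange.symm.toLinearMap
    with hlam0
  have hlam0X : ∀ X : ↥P, lam0 ⟨α X, LinearMap.mem_range_self α X⟩ = gg X := by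
    intro X
    have h2 : α.quotKerEquivRange.symm ⟨α X, LinearMap.mem_range_self α X⟩ =
        Submodule.Quotient.mk X := α.quotKerEquivRange_symm_apply_image X _
    rw [hlam0]
    simp only [LinearMap.comp_apply, LinearEquiv.coe_toLinearMap, h2]
    exact Submodule.liftQ_apply _ _ _
  have hsmulK : ∀ (r : R) (v : ↥S → K), residue R r • v = r • v := by
    intro r v; funext j
    exact hmulK r (v j)
  set Sk : Submodule K (↥S → K) :=
    { carrier := (LinearMap.range α : Set (↥S → K))
      add_mem' := fun h1 h2 => (LinearMap.range α).add_mem h1 h2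
      zero_mem' := (LinearMap.range α).zero_mem
      smul_mem' := by
        intro d v hv
        obtain ⟨r, rfl⟩ := residue_surjective d
        show residue R r • v ∈ LinearMap.range α
        rw [hsmulK]
        exact (LinearMap.range α).smul_mem r hv } with hSk
  set lam0' : ↥Sk →ₗ[K] K :=
    { toFun := fun v => lam0 ⟨v.1, v.2⟩
      map_add' := by
        intro v w
        have : ((v + w : ↥Sk) : ↥S → K) = (v : ↥S → K) + (w : ↥S → K) := rfl
        rw [← map_add lam0 ⟨v.1, v.2⟩ ⟨w.1, w.2⟩]
        rfl
      map_smul' := by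
        intro d v
        obtain ⟨r, rfl⟩ := residue_surjective d
        have h1 : ((residue R r • v : ↥Sk) : ↥S → K) = r • (v : ↥S → K) := hsmulK r v.1
        calc lam0 ⟨(residue R r • v : ↥Sk).1, (residue R r • v).2⟩
            = lam0 (r • (⟨v.1, v.2⟩ : ↥(LinearMap.range α))) := congrArg lam0 (Subtype.ext h1)
          _ = r • lam0 ⟨v.1, v.2⟩ := map_smul lam0 r _
          _ = residue R r • lam0 ⟨v.1, v.2⟩ := (hmulK _ _).symm } with hlam0'
  obtain ⟨Λ, hΛ⟩ := LinearMap.exists_extend lam0'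
  have hfac : ∀ X : ↥P, gg X = Λ (α X) := by
    intro X
    have hmem : α X ∈ Sk := LinearMap.mem_range_self α X
    have h3 := LinearMap.congr_fun hΛ ⟨α X, hmem⟩
    rw [← hlam0X X]
    exact h3.symm
  choose rr hrr using fun j : ↥S =>
    residue_surjective (R := R) (Λ (fun i => if j = i then 1 else 0))
  set s : R := ∑ j : ↥S, rr j * (j : R) with hs
  have hsmem : s ∈ (maximalIdeal R) ^ t := by
    apply Submodule.sum_mem
    intro j _
    exact Ideal.mul_mem_left _ _ (hSmem j)
  refine ⟨s, hsmem, ?_⟩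
  intro x hx
  set X : ↥P := ⟨x, hx⟩ with hX
  have h2 : Λ (α X) = ∑ j : ↥S, (α X j) • Λ (fun i => if j = i then 1 else 0) :=
    LinearMap.pi_apply_eq_sum_univ Λ (α X)
  have h3 : ∀ j : ↥S, (α X j) • Λ (fun i => if j = i then 1 else 0) =
      e.symm ⟨(rr j * (j : R)) • x, hc0 _ (Ideal.mul_mem_left _ _ (hSmem j)) X⟩ := by
    intro j
    rw [← hrr j, smul_eq_mul, mul_comm, ← smul_eq_mul, hmulK, hαapp, ← map_smul]
    apply congrArg
    apply Subtype.ext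
    show rr j • ((j : R) • x) = (rr j * (j : R)) • x
    rw [smul_smul]
  have h4 : (∑ j : ↥S, e.symm ⟨(rr j * (j : R)) • x,
        hc0 _ (Ideal.mul_mem_left _ _ (hSmem j)) X⟩) =
      e.symm ⟨s • x, hc0 _ hsmem X⟩ := by
    rw [← map_sum]
    apply congrArg
    apply Subtype.ext
    rw [AddSubmonoidClass.coe_finset_sum]
    show (∑ j : ↥S, (rr j * (j : R)) • x) = s • x
    rw [hs, Finset.sum_smul]
  have h5 : gg X = e.symm ⟨s • x, hc0 _ hsmem X⟩ := by
    rw [hfac X, h2, Finset.sum_congr rfl (fun j _ => h3 j), h4]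
  rw [hggapp X] at h5
  have := e.symm.injective h5
  exact Subtype.ext_iff.mp this

/-- On each `MatlisEt t`, every endomorphism of `E` is multiplication by a scalar. -/
lemma matlis_claimC (hι : Function.Injective ι)
    (hess : ∀ N : Submodule R E, N ≠ ⊥ → N ⊓ LinearMap.range ι ≠ ⊥)
    (t : ℕ) (f : E →ₗ[R] E) : ∃ r : R, ∀ x ∈ MatlisEt R E t, f x = r • x := by
  induction t with
  | zero =>
    refine ⟨0, fun x hx => ?_⟩
    have hx0 : x = 0 := by
      have := hx 1 (by rw [pow_zero, Ideal.one_eq_top]; exact Submodule.mem_top)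
      rwa [one_smul] at this
    rw [hx0, map_zero, smul_zero]
  | succ t ih =>
    obtain ⟨r, hr⟩ := ih
    obtain ⟨s, _, hs⟩ := matlis_step ι hι hess t (f - r • LinearMap.id)
      (fun x hx => by
        simp only [LinearMap.sub_apply, LinearMap.smul_apply, LinearMap.id_apply]
        rw [hr x hx, sub_self])
    refine ⟨r + s, fun x hx => ?_⟩
    have := hs x hx
    simp only [LinearMap.sub_apply, LinearMap.smul_apply, LinearMap.id_apply] at this
    rw [add_smul, ← this]
    abel

/-- Over a complete local ring, every endomorphism of `E` is multiplication by a scalar. -/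
lemma matlis_endE [IsAdicComplete (maximalIdeal R) R] (hι : Function.Injective ι)
    (hess : ∀ N : Submodule R E, N ≠ ⊥ → N ⊓ LinearMap.range ι ≠ ⊥)
    (f : E →ₗ[R] E) : ∃ r : R, ∀ x : E, f x = r • x := by
  choose rr hrr using fun t => matlis_claimC ι hι hess t f
  have hco : ∀ {m n : ℕ}, m ≤ n →
      rr m ≡ rr n [SMOD ((maximalIdeal R) ^ m • ⊤ : Submodule R R)] := by
    intro m n hmn
    rw [SModEq.sub_mem]
    have h1 : ((maximalIdeal R) ^ m • ⊤ : Submodule R R) = (maximalIdeal R) ^ m := by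
      rw [smul_eq_mul, Ideal.mul_top]
    rw [h1]
    apply matlis_ann_le ι hι
    intro x hx
    have hxn : x ∈ MatlisEt R E n := MatlisEt_mono R E hmn hx
    rw [sub_smul, ← hrr m x hx, ← hrr n x hxn, sub_self]
  obtain ⟨L, hL⟩ := IsPrecomplete.prec (IsAdicComplete.toIsPrecomplete) @hco
  refine ⟨L, fun x => ?_⟩
  obtain ⟨t, ht⟩ := matlis_torsion ι hess x
  have h2 : rr t - L ∈ (maximalIdeal R) ^ t := by
    have := (SModEq.sub_mem).mp (hL t)
    rwa [smul_eq_mul, Ideal.mul_top] at this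
  have h3 : (rr t - L) • x = 0 := ht _ h2
  rw [sub_smul, sub_eq_zero] at h3
  rw [hrr t x ht, h3]

/-- Evaluation to the double dual is surjective for finite powers of `E`. -/
lemma matlis_evG [IsAdicComplete (maximalIdeal R) R] (hι : Function.Injective ι)
    (hess : ∀ N : Submodule R E, N ≠ ⊥ → N ⊓ LinearMap.range ι ≠ ⊥)
    {J : Type} [Fintype J] [DecidableEq J]
    (ξ : ((J → E) →ₗ[R] E) →ₗ[R] E) :
    ∃ y : J → E, ∀ Θ : (J → E) →ₗ[R] E, ξ Θ = Θ y := by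
  classical
  set y : J → E := fun j => ξ (LinearMap.proj j) with hy
  refine ⟨y, fun Θ => ?_⟩
  have hdec : Θ = ∑ j : J, (Θ ∘ₗ LinearMap.single R (fun _ => E) j) ∘ₗ LinearMap.proj j := by
    refine LinearMap.ext fun g => ?_
    rw [LinearMap.sum_apply]
    simp only [LinearMap.comp_apply, LinearMap.proj_apply, LinearMap.coe_single]
    rw [← map_sum]
    congr 1
    exact (Finset.univ_sum_single g).symm
  rw [hdec, map_sum, LinearMap.sum_apply]
  apply Finset.sum_congr rfl
  intro j _
  obtain ⟨r, hr⟩ := matlis_endE ι hι hess (Θ ∘ₗ LinearMap.single R (fun _ => E) j)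
  have hcomp : (Θ ∘ₗ LinearMap.single R (fun _ => E) j) ∘ₗ LinearMap.proj j
      = r • (LinearMap.proj j : (J → E) →ₗ[R] E) := by
    refine LinearMap.ext fun g => ?_
    simp only [LinearMap.comp_apply, LinearMap.smul_apply, LinearMap.proj_apply,
      LinearMap.coe_single]
    exact hr (g j)
  rw [hcomp, map_smul]
  rfl

/-- An Artinian module is separated by finitely many maps to `E`. -/
lemma matlis_embed (hι : Function.Injective ι) {M : Type} [AddCommGroup M] [Module R M]
    [IsArtinian R M] :
    ∃ s : Finset (M →ₗ[R] E), ∀ x : M, (∀ θ ∈ s, θ x = 0) → x = 0 := by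
  classical
  obtain ⟨N₀, hN₀mem, hmin⟩ := IsArtinian.set_has_minimal
    {N : Submodule R M | ∃ s : Finset (M →ₗ[R] E), N = s.inf LinearMap.ker}
    ⟨⊤, ∅, by simp⟩
  obtain ⟨s₀, rfl⟩ := hN₀mem
  refine ⟨s₀, fun x hx => ?_⟩
  by_contra hx0
  have hxN : x ∈ s₀.inf LinearMap.ker := by
    rw [Submodule.mem_finsetInf]
    intro θ hθ
    rw [LinearMap.mem_ker]; exact hx θ hθ
  obtain ⟨θ, hθ⟩ := matlis_cogen ι hι x hx0
  have hlt : (insert θ s₀).inf LinearMap.ker < s₀.inf LinearMap.ker := by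
    rw [Finset.inf_insert]
    apply lt_of_le_of_ne inf_le_right
    intro heq
    have hle : s₀.inf LinearMap.ker ≤ LinearMap.ker θ := by rw [← heq]; exact inf_le_left
    exact hθ (hle hxN)
  exact hmin _ ⟨insert θ s₀, rfl⟩ hlt

/-- Evaluation to the double dual is surjective for Artinian modules. -/
lemma matlis_evM [IsAdicComplete (maximalIdeal R) R] (hι : Function.Injective ι)
    (hess : ∀ N : Submodule R E, N ≠ ⊥ → N ⊓ LinearMap.range ι ≠ ⊥)
    {M : Type} [AddCommGroup M] [Module R M] [IsArtinian R M]
    (ξ : (M →ₗ[R] E) →ₗ[R] E) : ∃ x : M, ∀ θ : M →ₗ[R] E, ξ θ = θ x := by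
  classical
  obtain ⟨s₀, hs₀⟩ := matlis_embed ι hι (M := M)
  set i : M →ₗ[R] (↥s₀ → E) := LinearMap.pi (fun θ => (θ : M →ₗ[R] E)) with hi
  have hker : LinearMap.ker i = ⊥ := by
    rw [Submodule.eq_bot_iff]
    intro m hm
    apply hs₀
    intro θ hθ
    have : i m = 0 := hm
    exact congrFun this ⟨θ, hθ⟩
  have hinj : Function.Injective i := LinearMap.ker_eq_bot.mp hker
  obtain ⟨y, hy⟩ := matlis_evG ι hι hess (ξ ∘ₗ LinearMap.lcomp R E i)
  have hy' : ∀ Θ : (↥s₀ → E) →ₗ[R] E, ξ (Θ ∘ₗ i) = Θ y := fun Θ => hy Θ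
  have hyr : y ∈ LinearMap.range i := by
    by_contra hyn
    have hq : (LinearMap.range i).mkQ y ≠ 0 := by
      rw [ne_eq, Submodule.mkQ_apply, Submodule.Quotient.mk_eq_zero]; exact hyn
    obtain ⟨η, hη⟩ := matlis_cogen ι hι _ hq
    have hcz : (η ∘ₗ (LinearMap.range i).mkQ) ∘ₗ i = 0 := by
      ext m
      simp only [LinearMap.comp_apply, LinearMap.zero_apply, Submodule.mkQ_apply]
      have : Submodule.Quotient.mk (i m) = (0 : (↥s₀ → E) ⧸ LinearMap.range i) :=
        (Submodule.Quotient.mk_eq_zero _).mpr (LinearMap.mem_range_self i m)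
      rw [this, map_zero]
    have h0 := hy' (η ∘ₗ (LinearMap.range i).mkQ)
    rw [hcz, map_zero] at h0
    exact hη h0.symm
  obtain ⟨x, rfl⟩ := hyr
  refine ⟨x, fun θ => ?_⟩
  obtain ⟨Θ, hΘ⟩ := Module.Injective.out i hinj θ
  have hΘc : Θ ∘ₗ i = θ := by ext m; exact hΘ m
  rw [← hΘc]
  exact hy' Θ

end Matlis

/-- Let `(R, m)` be a complete Noetherian local ring, `E` an injective hull of
the residue field `R/m` (an injective module together with an injective linear map
`ι : R/m → E` with essential image), and `D(-) = Hom_R(-, E)` the Matlis duality functor.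
Let `M` be an Artinian `R`-module. Then the natural map
`Φ : Hom_R(M, M) → Hom_R(D(M), D(M))`, `Φ(φ)(θ) = θ ∘ φ`, is bijective. -/
theorem matlis_endomorphism_bijective_of_isArtinian
    (R : Type) [CommRing R] [IsNoetherianRing R] [IsLocalRing R]
    [IsAdicComplete (IsLocalRing.maximalIdeal R) R]
    (E : Type) [AddCommGroup E] [Module R E] [Module.Injective R E]
    (ι : IsLocalRing.ResidueField R →ₗ[R] E) (hι : Function.Injective ι)
    (hess : ∀ N : Submodule R E, N ≠ ⊥ → N ⊓ LinearMap.range ι ≠ ⊥)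
    (M : Type) [AddCommGroup M] [Module R M] [IsArtinian R M] :
    Function.Bijective (fun φ : M →ₗ[R] M =>
      (LinearMap.lcomp R E φ : (M →ₗ[R] E) →ₗ[R] (M →ₗ[R] E))) := by
  constructor
  · -- injectivity
    intro φ₁ φ₂ h
    refine LinearMap.ext fun x => ?_
    apply matlis_sep ι hι
    intro θ
    have := LinearMap.congr_fun (congrArg (fun F => F θ) h) x
    exact this
  · -- surjectivity
    intro ψ
    -- for each `x : M`, the functional `θ ↦ (ψ θ) x` is evaluation at a unique point `φ x`
    have hφ : ∀ x : M, ∃ z : M, ∀ θ : M →ₗ[R] E, ψ θ x = θ z := by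
      intro x
      exact matlis_evM ι hι hess
        { toFun := fun θ => ψ θ x
          map_add' := fun θ₁ θ₂ => by
            show ψ (θ₁ + θ₂) x = ψ θ₁ x + ψ θ₂ x
            rw [map_add]; rfl
          map_smul' := fun r θ => by
            show ψ (r • θ) x = r • ψ θ x
            rw [map_smul]; rfl }
    choose φ hφ using hφ
    have hadd : ∀ a b : M, φ (a + b) = φ a + φ b := by
      intro a b
      apply matlis_sep ι hι
      intro θ
      rw [map_add, ← hφ a θ, ← hφ b θ, ← hφ (a + b) θ, map_add]
    have hsmul : ∀ (r : R) (a : M), φ (r • a) = r • φ a := by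
      intro r a
      apply matlis_sep ι hι
      intro θ
      rw [map_smul, ← hφ a θ, ← hφ (r • a) θ, map_smul]
    refine ⟨{ toFun := φ, map_add' := hadd, map_smul' := hsmul }, ?_⟩
    refine LinearMap.ext fun θ => LinearMap.ext fun x => ?_
    show θ (φ x) = ψ θ x
    exact (hφ x θ).symm
end

section
/- Let (A, m) be a Noetherian local ring of prime characteristic p > 0, let I ⊆ A be an ideal, and let i ≥ 0 be an integer. Then there is a natural isomorphism of A-modules between the inverse limit over e of the local cohomology modules H^i_m(A/I^{[p^e]}) (with transition maps induced by the natural surjections A/I^{[p^{e+1}]} → A/I^{[p^e]}) and the i-th formal local cohomology module, i.e. the inverse limit over n of H^i_m(A/I^n) (with transition maps induced by the natural surjections A/I^{n+1} → A/I^n): lim_e H^i_m(A/I^{[p^e]}) ≅ lim_n H^i_m(A/I^n). -/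
open IsLocalRing

/-- The inverse limit of an `ℕ`-indexed tower of modules `... → M (n+1) → M n → ... → M 0`,
realized as the submodule of the product consisting of the compatible families. -/
def Module.invLimit (A : Type*) [Semiring A] (M : ℕ → Type*)
    [∀ n, AddCommMonoid (M n)] [∀ n, Module A (M n)]
    (t : ∀ n, M (n + 1) →ₗ[A] M n) : Submodule A (∀ n, M n) where
  carrier := {f | ∀ n, t n (f (n + 1)) = f n}
  add_mem' := fun ha hb n => by simp [map_add, ha n, hb n]
  zero_mem' := fun n => by simp
  smul_mem' := fun c a ha n => by simp [map_smul, ha n]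

/-- The Frobenius power `I^{[q]}`: the ideal generated by the `q`-th powers of the
elements of `I`. -/
def Ideal.frobPow {A : Type*} [CommRing A] (I : Ideal A) (q : ℕ) : Ideal A :=
  Ideal.span ((fun a => a ^ q) '' (I : Set A))

/-- The Frobenius powers `I^{[p^e]}` form a decreasing family. -/
lemma Ideal.frobPow_succ_le {A : Type*} [CommRing A] (I : Ideal A) {p : ℕ} (hp : 1 ≤ p)
    (e : ℕ) : I.frobPow (p ^ (e + 1)) ≤ I.frobPow (p ^ e) := by
  rw [Ideal.frobPow, Ideal.span_le]
  rintro _ ⟨a, ha, rfl⟩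
  have key : a ^ p ^ (e + 1) = a ^ p ^ e * a ^ (p ^ e * (p - 1)) := by
    rw [← pow_add]
    congr 1
    have : p ^ e + p ^ e * (p - 1) = p ^ e * (1 + (p - 1)) := by ring
    rw [this, Nat.add_sub_cancel' hp, pow_succ]
  show a ^ p ^ (e + 1) ∈ I.frobPow (p ^ e)
  rw [key]
  exact Ideal.mul_mem_right _ _ (Ideal.subset_span ⟨a, ha, rfl⟩)

section Aux

open CategoryTheory

variable {A : Type} [CommRing A] (F : ModuleCat A ⥤ ModuleCat A)

/-- The map `F(A/J) → F(A/K)` induced by the projection `A/J → A/K` for `J ≤ K`. -/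
noncomputable def qmapF (J K : Ideal A) (h : J ≤ K) :
    F.obj (ModuleCat.of A (A ⧸ J)) →ₗ[A] F.obj (ModuleCat.of A (A ⧸ K)) :=
  (F.map (ModuleCat.ofHom (Submodule.mapQ J K LinearMap.id (by simpa using h)))).hom

lemma qmapF_id (J : Ideal A) (h : J ≤ J) (x) : qmapF F J J h x = x := by
  unfold qmapF
  rw [Submodule.mapQ_id]
  rw [show ModuleCat.ofHom (LinearMap.id (R := A) (M := A ⧸ J)) =
    𝟙 (ModuleCat.of A (A ⧸ J)) from rfl, F.map_id]
  rfl

lemma qmapF_comp {J K L : Ideal A} (h1 : J ≤ K) (h2 : K ≤ L) (h3 : J ≤ L) (x) :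
    qmapF F K L h2 (qmapF F J K h1 x) = qmapF F J L h3 x := by
  have hcomp : Submodule.mapQ J L LinearMap.id (by simpa using h3) =
      (Submodule.mapQ K L LinearMap.id (by simpa using h2)).comp
        (Submodule.mapQ J K LinearMap.id (by simpa using h1)) := by
    rw [← Submodule.mapQ_comp]
    congr 1
  unfold qmapF
  rw [hcomp]
  rw [show ModuleCat.ofHom ((Submodule.mapQ K L LinearMap.id (by simpa using h2)).comp
        (Submodule.mapQ J K LinearMap.id (by simpa using h1))) =
      ModuleCat.ofHom (Submodule.mapQ J K LinearMap.id (by simpa using h1)) ≫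
        ModuleCat.ofHom (Submodule.mapQ K L LinearMap.id (by simpa using h2)) from rfl,
    F.map_comp]
  rfl

variable (Jc : ℕ → Ideal A) (hJc : ∀ n, Jc (n + 1) ≤ Jc n)

/-- The inverse limit of the tower `F(A/Jc n)`. -/
noncomputable def limF : Submodule A (∀ n, F.obj (ModuleCat.of A (A ⧸ Jc n))) :=
  Module.invLimit A (fun n => F.obj (ModuleCat.of A (A ⧸ Jc n)))
    (fun n => qmapF F _ _ (hJc n))

lemma limF_eval {f : ∀ n, F.obj (ModuleCat.of A (A ⧸ Jc n))}
    (hf : f ∈ limF F Jc hJc) {k m : ℕ} (h : k ≤ m) (hle : Jc m ≤ Jc k) :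
    qmapF F (Jc m) (Jc k) hle (f m) = f k := by
  induction m, h using Nat.le_induction with
  | base => exact qmapF_id F _ _ _
  | succ m hm ih =>
      have : qmapF F (Jc (m + 1)) (Jc k) hle (f (m + 1)) =
          qmapF F (Jc m) (Jc k) ((antitone_nat_of_succ_le hJc) hm)
            (qmapF F (Jc (m + 1)) (Jc m) (hJc m) (f (m + 1))) :=
        (qmapF_comp F _ _ _ _).symm
      rw [this, hf m, ih]

variable (Kc : ℕ → Ideal A) (hKc : ∀ n, Kc (n + 1) ≤ Kc n)
variable (φ : ℕ → ℕ) (hφ : Monotone φ) (hJK : ∀ n, Jc (φ n) ≤ Kc n)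

/-- The map between inverse limits induced by a cofinal comparison of towers. -/
noncomputable def towerHom : limF F Jc hJc →ₗ[A] limF F Kc hKc where
  toFun f := ⟨fun n => qmapF F _ _ (hJK n) (f.1 (φ n)), by
    intro n
    show qmapF F (Kc (n + 1)) (Kc n) (hKc n)
        (qmapF F (Jc (φ (n + 1))) (Kc (n + 1)) _ (f.1 (φ (n + 1)))) = _
    rw [qmapF_comp F _ _ ((hJK (n + 1)).trans (hKc n)) _,
      ← qmapF_comp F ((antitone_nat_of_succ_le hJc) (hφ (Nat.le_succ n))) (hJK n) _,
      limF_eval F Jc hJc f.2 (hφ (Nat.le_succ n))]⟩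
  map_add' f g := by
    apply Subtype.ext
    funext n
    simp only [Submodule.coe_add, Pi.add_apply, map_add]
  map_smul' c f := by
    apply Subtype.ext
    funext n
    simp only [SetLike.val_smul, Pi.smul_apply, map_smul, RingHom.id_apply]

variable (ψ : ℕ → ℕ) (hψ : Monotone ψ) (hKJ : ∀ e, Kc (ψ e) ≤ Jc e)
lemma towerHom_inverse (hψφ : ∀ n, n ≤ ψ (φ n)) :
    ∀ f, towerHom F Jc hJc Kc hKc φ hφ hJK
      (towerHom F Kc hKc Jc hJc ψ hψ hKJ f) = f := by
  intro f
  apply Subtype.ext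
  funext n
  show qmapF F (Jc (φ n)) (Kc n) (hJK n)
      (qmapF F (Kc (ψ (φ n))) (Jc (φ n)) (hKJ (φ n)) (f.1 (ψ (φ n)))) = f.1 n
  rw [qmapF_comp F _ _ ((hKJ (φ n)).trans (hJK n)) _,
    limF_eval F Kc hKc f.2 (hψφ n)]

variable (hφψ : ∀ e, e ≤ φ (ψ e)) (hψφ : ∀ n, n ≤ ψ (φ n))

/-- Inverse limits over interleaved towers of ideals are isomorphic. -/
noncomputable def towerEquiv : limF F Jc hJc ≃ₗ[A] limF F Kc hKc :=
  LinearEquiv.ofLinear (towerHom F Jc hJc Kc hKc φ hφ hJK)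
    (towerHom F Kc hKc Jc hJc ψ hψ hKJ)
    (LinearMap.ext (towerHom_inverse F Jc hJc Kc hKc φ hφ hJK ψ hψ hKJ hψφ))
    (LinearMap.ext (towerHom_inverse F Kc hKc Jc hJc ψ hψ hKJ φ hφ hJK hφψ))

end Aux

section Ideals

variable {A : Type} [CommRing A]

lemma Ideal.frobPow_mono {I J : Ideal A} (h : I ≤ J) (q : ℕ) :
    I.frobPow q ≤ J.frobPow q := by
  rw [Ideal.frobPow, Ideal.span_le]
  rintro _ ⟨a, ha, rfl⟩
  exact Ideal.subset_span ⟨a, h ha, rfl⟩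

lemma Ideal.frobPow_le_pow (I : Ideal A) {q n : ℕ} (h : n ≤ q) :
    I.frobPow q ≤ I ^ n := by
  rw [Ideal.frobPow, Ideal.span_le]
  rintro _ ⟨a, ha, rfl⟩
  exact Ideal.pow_le_pow_right h (Ideal.pow_mem_pow ha q)

lemma Ideal.span_pow_le_frobPow (s : Finset A) (q : ℕ) (hq : 1 ≤ q) :
    (Ideal.span (s : Set A)) ^ ((s.card + 1) * q) ≤ (Ideal.span (s : Set A)).frobPow q := by
  classical
  induction s using Finset.induction with
  | empty =>
      simp only [Finset.coe_empty, Ideal.span_empty, Finset.card_empty, zero_add, one_mul]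
      calc (⊥ : Ideal A) ^ q ≤ ⊥ ^ 1 := Ideal.pow_le_pow_right hq
        _ = ⊥ := pow_one _
        _ ≤ _ := bot_le
  | @insert a s ha ih =>
      have hcard : (insert a s).card = s.card + 1 := Finset.card_insert_of_notMem ha
      have hspan : Ideal.span ((insert a s : Finset A) : Set A) =
          Ideal.span {a} ⊔ Ideal.span (s : Set A) := by
        rw [Finset.coe_insert, Set.insert_eq, Ideal.span_union]
      rw [hcard, hspan]
      have hexp : (s.card + 1 + 1) * q = q + (s.card + 1) * q := by ring
      rw [hexp]
      refine le_trans Ideal.sup_pow_add_le_pow_sup_pow (sup_le ?_ ?_)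
      · rw [Ideal.span_singleton_pow, Ideal.span_le, Set.singleton_subset_iff]
        exact Ideal.subset_span ⟨a, by
          rw [← hspan]; exact Ideal.subset_span (Finset.mem_insert_self a s), rfl⟩
      · exact le_trans ih (Ideal.frobPow_mono le_sup_right q)

end Ideals

/-- Let `(A, m)` be a Noetherian local ring of prime characteristic `p > 0`,
`I ⊆ A` an ideal and `i ≥ 0` an integer. Then there is a natural `A`-module isomorphism
`lim_e H^i_m(A / I^{[p^e]}) ≅ lim_n H^i_m(A / I^n)`, the transition maps being induced by the
natural surjections between the quotients. -/
theorem invLimit_localCohomology_frobPow_iso_invLimit_localCohomology_pow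
    (A : Type) [CommRing A] [IsNoetherianRing A] [IsLocalRing A]
    (p : ℕ) (hp : p.Prime) [CharP A p] (I : Ideal A) (i : ℕ) :
    Nonempty (
      (Module.invLimit A
        (fun e => ((localCohomology (maximalIdeal A) i).obj
          (ModuleCat.of A (A ⧸ I.frobPow (p ^ e)))))
        (fun e => ((localCohomology (maximalIdeal A) i).map
          (ModuleCat.ofHom (Submodule.mapQ (I.frobPow (p ^ (e + 1))) (I.frobPow (p ^ e))
            LinearMap.id (by simpa using I.frobPow_succ_le hp.one_lt.le e)))).hom))
      ≃ₗ[A]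
      (Module.invLimit A
        (fun n => ((localCohomology (maximalIdeal A) i).obj
          (ModuleCat.of A (A ⧸ I ^ n))))
        (fun n => ((localCohomology (maximalIdeal A) i).map
          (ModuleCat.ofHom (Submodule.mapQ (I ^ (n + 1)) (I ^ n)
            LinearMap.id (by simpa using Ideal.pow_le_pow_right (Nat.le_succ n))))).hom))) := by
  obtain ⟨s, hs⟩ : I.FG := IsNoetherian.noetherian I
  exact ⟨towerEquiv (localCohomology (maximalIdeal A) i)
    (fun e => I.frobPow (p ^ e)) (fun e => I.frobPow_succ_le hp.one_lt.le e)
    (fun n => I ^ n) (fun n => Ideal.pow_le_pow_right (Nat.le_succ n))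
    id monotone_id
    (fun n => I.frobPow_le_pow (Nat.lt_pow_self hp.one_lt : n < p ^ n).le)
    (fun e => (s.card + 1) * p ^ e)
    (fun a b h => Nat.mul_le_mul_left _ (Nat.pow_le_pow_right hp.pos h))
    (fun e => by
      rw [← hs]
      exact Ideal.span_pow_le_frobPow s (p ^ e) (Nat.one_le_pow _ _ hp.pos))
    (fun e => le_trans (Nat.lt_pow_self hp.one_lt : e < p ^ e).le
      (Nat.le_mul_of_pos_left _ (Nat.succ_pos s.card)))
    (fun n => le_trans (Nat.lt_pow_self hp.one_lt : n < p ^ n).le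
      (Nat.le_mul_of_pos_left _ (Nat.succ_pos s.card)))⟩
end
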